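/- If the graph G = G(Q,S) contains P_5 as a contraction, then the hypergraph (Q, S) has a 2-colouring. -/

import Mathlib

/-- `W` is an `H`-witness structure of `G`: a family of pairwise disjoint nonempty
connected subsets of `V(G)` covering `V(G)` such that distinct `h₁ h₂` are adjacent in `H`
iff there is an edge of `G` between `W h₁` and `W h₂`. -/
def IsWitnessStructure {V U : Type*} (G : SimpleGraph V) (H : SimpleGraph U)
    (W : U → Set V) : Prop :=
  (∀ h, (W h).Nonempty) ∧
  (∀ h₁ h₂, h₁ ≠ h₂ → Disjoint (W h₁) (W h₂)) ∧
  (⋃ h, W h) = Set.univ ∧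
  (∀ h, (G.induce (W h)).Connected) ∧
  (∀ h₁ h₂, h₁ ≠ h₂ → ((∃ a ∈ W h₁, ∃ b ∈ W h₂, G.Adj a b) ↔ H.Adj h₁ h₂))

/-- `G` contains `H` as a contraction. -/
def ContainsAsContraction {V U : Type*} (G : SimpleGraph V) (H : SimpleGraph U) : Prop :=
  ∃ W : U → Set V, IsWitnessStructure G H W

/-- Raw vertex names for the graph `G(Q,S)`: elements `q_i`, hyperedges `S_j`,
copies `S_j'`, subdivision vertices `q^i_j`, and special vertices `q*`, `u₁`, `u₂`, `v`, `w`. -/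
inductive HVertex (m n : ℕ) : Type
  | elt : Fin m → HVertex m n
  | hyp : Fin n → HVertex m n
  | copy : Fin n → HVertex m n
  | sub : Fin m → Fin n → HVertex m n
  | qstar : HVertex m n
  | u1 : HVertex m n
  | u2 : HVertex m n
  | v : HVertex m n
  | w : HVertex m n

/-- A raw vertex name is an actual vertex of `G(Q,S)`: the subdivision vertex `q^i_j`
exists only when `q_i ∈ S_j`. -/
def HVertex.OK {m n : ℕ} (S : Fin n → Set (Fin m)) : HVertex m n → Prop
  | .sub i j => i ∈ S j
  | _ => True

/-- The vertex set of `G(Q,S)`. -/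
def GVertex {m n : ℕ} (S : Fin n → Set (Fin m)) : Type := {x : HVertex m n // x.OK S}

/-- The (asymmetrically listed) edges of `G(Q,S)`:
`q^i_j q_i`, `q^i_j S_j`, `q_i S_j'` (for `q_i ∈ S_j`), `S_j S_k'` (all `j,k`),
`q* u₁`, `q* u₂`, `q* q^i_j`, `u₁ S_j`, `u₂ S_j`, `u₁ v`, `u₂ v`, `w S_j'`. -/
def baseAdj {m n : ℕ} (S : Fin n → Set (Fin m)) : HVertex m n → HVertex m n → Prop
  | .sub i _, .elt i' => i = i'
  | .sub _ j, .hyp j' => j = j'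
  | .elt i, .copy j => i ∈ S j
  | .hyp _, .copy _ => True
  | .qstar, .u1 => True
  | .qstar, .u2 => True
  | .qstar, .sub _ _ => True
  | .u1, .hyp _ => True
  | .u2, .hyp _ => True
  | .u1, .v => True
  | .u2, .v => True
  | .w, .copy _ => True
  | _, _ => False

/-- The graph `G = G(Q,S)`. -/
def GQS {m n : ℕ} (S : Fin n → Set (Fin m)) : SimpleGraph (GVertex S) :=
  SimpleGraph.fromRel (fun a b => baseAdj S a.1 b.1)

/-- `(Q₁, Q₂)` is a 2-colouring of the hypergraph `(Q, S)`: a partition of `Q` such that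
every hyperedge meets both parts. -/
def IsTwoColouring {m n : ℕ} (S : Fin n → Set (Fin m)) (Q₁ Q₂ : Set (Fin m)) : Prop :=
  Q₁ ∪ Q₂ = Set.univ ∧ Disjoint Q₁ Q₂ ∧ ∀ j, (Q₁ ∩ S j).Nonempty ∧ (Q₂ ∩ S j).Nonempty

namespace PfAux

variable {m n : ℕ} {S : Fin n → Set (Fin m)}

def gE (S : Fin n → Set (Fin m)) (i : Fin m) : GVertex S := ⟨.elt i, trivial⟩
def gH (S : Fin n → Set (Fin m)) (j : Fin n) : GVertex S := ⟨.hyp j, trivial⟩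
def gC (S : Fin n → Set (Fin m)) (j : Fin n) : GVertex S := ⟨.copy j, trivial⟩
def gS (S : Fin n → Set (Fin m)) (i : Fin m) (j : Fin n) (h : i ∈ S j) : GVertex S := ⟨.sub i j, h⟩
def gQ (S : Fin n → Set (Fin m)) : GVertex S := ⟨.qstar, trivial⟩
def gU1 (S : Fin n → Set (Fin m)) : GVertex S := ⟨.u1, trivial⟩
def gU2 (S : Fin n → Set (Fin m)) : GVertex S := ⟨.u2, trivial⟩
def gV (S : Fin n → Set (Fin m)) : GVertex S := ⟨.v, trivial⟩
def gW (S : Fin n → Set (Fin m)) : GVertex S := ⟨.w, trivial⟩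

lemma gadj {a b : GVertex S} (h1 : a.1 ≠ b.1)
    (h2 : baseAdj S a.1 b.1 ∨ baseAdj S b.1 a.1) : (GQS S).Adj a b :=
  (SimpleGraph.fromRel_adj _ a b).mpr ⟨fun h => h1 (congrArg Subtype.val h), h2⟩

lemma aSE (i : Fin m) (j : Fin n) (h : i ∈ S j) : (GQS S).Adj (gS S i j h) (gE S i) :=
  gadj (fun h => nomatch h) (Or.inl rfl)
lemma aSH (i : Fin m) (j : Fin n) (h : i ∈ S j) : (GQS S).Adj (gS S i j h) (gH S j) :=
  gadj (fun h => nomatch h) (Or.inl rfl)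
lemma aEC (i : Fin m) (j : Fin n) (h : i ∈ S j) : (GQS S).Adj (gE S i) (gC S j) :=
  gadj (fun h => nomatch h) (Or.inl h)
lemma aHC (j k : Fin n) : (GQS S).Adj (gH S j) (gC S k) :=
  gadj (fun h => nomatch h) (Or.inl trivial)
lemma aQU1 : (GQS S).Adj (gQ S) (gU1 S) :=
  gadj (fun h => nomatch h) (Or.inl trivial)
lemma aQU2 : (GQS S).Adj (gQ S) (gU2 S) :=
  gadj (fun h => nomatch h) (Or.inl trivial)
lemma aQS (i : Fin m) (j : Fin n) (h : i ∈ S j) : (GQS S).Adj (gQ S) (gS S i j h) :=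
  gadj (fun h => nomatch h) (Or.inl trivial)
lemma aU1H (j : Fin n) : (GQS S).Adj (gU1 S) (gH S j) :=
  gadj (fun h => nomatch h) (Or.inl trivial)
lemma aU2H (j : Fin n) : (GQS S).Adj (gU2 S) (gH S j) :=
  gadj (fun h => nomatch h) (Or.inl trivial)
lemma aU1V : (GQS S).Adj (gU1 S) (gV S) :=
  gadj (fun h => nomatch h) (Or.inl trivial)
lemma aU2V : (GQS S).Adj (gU2 S) (gV S) :=
  gadj (fun h => nomatch h) (Or.inl trivial)
lemma aWC (j : Fin n) : (GQS S).Adj (gW S) (gC S j) :=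
  gadj (fun h => nomatch h) (Or.inl trivial)

lemma nbr_v (z : GVertex S) (h : (GQS S).Adj (gV S) z) : z = gU1 S ∨ z = gU2 S := by
  obtain ⟨c, hc⟩ := z
  obtain ⟨hne', hb | hb⟩ := (SimpleGraph.fromRel_adj _ _ _).mp h
  · cases c <;> exact (show False from hb).elim
  · cases c
    case u1 => exact Or.inl rfl
    case u2 => exact Or.inr rfl
    all_goals exact (show False from hb).elim


variable {m n : ℕ} {S : Fin n → Set (Fin m)}

lemma nbr_w (z : GVertex S) (h : (GQS S).Adj (gW S) z) : ∃ k, z = gC S k := by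
  obtain ⟨c, hc⟩ := z
  obtain ⟨hne', hb | hb⟩ := (SimpleGraph.fromRel_adj _ _ _).mp h
  · cases c
    case copy k => exact ⟨k, rfl⟩
    all_goals exact (show False from hb).elim
  · cases c <;> exact (show False from hb).elim

lemma nbr_u1 (z : GVertex S) (h : (GQS S).Adj (gU1 S) z) :
    z = gV S ∨ z = gQ S ∨ ∃ j, z = gH S j := by
  obtain ⟨c, hc⟩ := z
  obtain ⟨hne', hb | hb⟩ := (SimpleGraph.fromRel_adj _ _ _).mp h
  · cases c
    case v => exact Or.inl rfl
    case hyp j => exact Or.inr (Or.inr ⟨j, rfl⟩)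
    all_goals exact (show False from hb).elim
  · cases c
    case qstar => exact Or.inr (Or.inl rfl)
    all_goals exact (show False from hb).elim

lemma nbr_u2 (z : GVertex S) (h : (GQS S).Adj (gU2 S) z) :
    z = gV S ∨ z = gQ S ∨ ∃ j, z = gH S j := by
  obtain ⟨c, hc⟩ := z
  obtain ⟨hne', hb | hb⟩ := (SimpleGraph.fromRel_adj _ _ _).mp h
  · cases c
    case v => exact Or.inl rfl
    case hyp j => exact Or.inr (Or.inr ⟨j, rfl⟩)
    all_goals exact (show False from hb).elim
  · cases c
    case qstar => exact Or.inr (Or.inl rfl)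
    all_goals exact (show False from hb).elim

lemma nbr_hyp (j : Fin n) (z : GVertex S) (h : (GQS S).Adj (gH S j) z) :
    z = gU1 S ∨ z = gU2 S ∨ (∃ k, z = gC S k) ∨ ∃ i hm, z = gS S i j hm := by
  obtain ⟨c, hc⟩ := z
  obtain ⟨hne', hb | hb⟩ := (SimpleGraph.fromRel_adj _ _ _).mp h
  · cases c
    case copy k => exact Or.inr (Or.inr (Or.inl ⟨k, rfl⟩))
    all_goals exact (show False from hb).elim
  · cases c
    case u1 => exact Or.inl rfl
    case u2 => exact Or.inr (Or.inl rfl)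
    case sub i j' =>
      have hb' : j' = j := hb
      subst hb'
      exact Or.inr (Or.inr (Or.inr ⟨i, hc, rfl⟩))
    all_goals exact (show False from hb).elim

lemma nbr_copy (k : Fin n) (z : GVertex S) (h : (GQS S).Adj (gC S k) z) :
    (∃ i, i ∈ S k ∧ z = gE S i) ∨ (∃ j, z = gH S j) ∨ z = gW S := by
  obtain ⟨c, hc⟩ := z
  obtain ⟨hne', hb | hb⟩ := (SimpleGraph.fromRel_adj _ _ _).mp h
  · cases c <;> exact (show False from hb).elim
  · cases c
    case elt i => exact Or.inl ⟨i, hb, rfl⟩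
    case hyp j => exact Or.inr (Or.inl ⟨j, rfl⟩)
    case w => exact Or.inr (Or.inr rfl)
    all_goals exact (show False from hb).elim

lemma nbr_sub (i : Fin m) (j : Fin n) (hm : i ∈ S j) (z : GVertex S)
    (h : (GQS S).Adj (gS S i j hm) z) : z = gE S i ∨ z = gH S j ∨ z = gQ S := by
  obtain ⟨c, hc⟩ := z
  obtain ⟨hne', hb | hb⟩ := (SimpleGraph.fromRel_adj _ _ _).mp h
  · cases c
    case elt i' =>
      have hb' : i = i' := hb
      subst hb'
      exact Or.inl rfl
    case hyp j' =>
      have hb' : j = j' := hb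
      subst hb'
      exact Or.inr (Or.inl rfl)
    all_goals exact (show False from hb).elim
  · cases c
    case qstar => exact Or.inr (Or.inr rfl)
    all_goals exact (show False from hb).elim

lemma nbr_elt (i : Fin m) (z : GVertex S) (h : (GQS S).Adj (gE S i) z) :
    (∃ k, z = gC S k) ∨ ∃ j hm, z = gS S i j hm := by
  obtain ⟨c, hc⟩ := z
  obtain ⟨hne', hb | hb⟩ := (SimpleGraph.fromRel_adj _ _ _).mp h
  · cases c
    case copy k => exact Or.inl ⟨k, rfl⟩
    all_goals exact (show False from hb).elim
  · cases c
    case sub i' j =>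
      have hb' : i' = i := hb
      subst hb'
      exact Or.inr ⟨j, hc, rfl⟩
    all_goals exact (show False from hb).elim


variable {m n : ℕ} {S : Fin n → Set (Fin m)}

def rho (π : GVertex S → Fin 5) (x : GVertex S) : ℕ := (π x).val

def Hst (π : GVertex S → Fin 5) : Prop :=
  ∀ a b, (GQS S).Adj a b → rho π a ≤ rho π b + 1 ∧ rho π b ≤ rho π a + 1

section chains
variable {π : GVertex S → Fin 5}

lemma chain1 (hst : Hst π) {a b : GVertex S} (h1 : (GQS S).Adj a b) :
    rho π a ≤ rho π b + 3 ∧ rho π b ≤ rho π a + 3 := by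
  have := hst _ _ h1; omega

lemma chain2 (hst : Hst π) {a b c : GVertex S} (h1 : (GQS S).Adj a b) (h2 : (GQS S).Adj b c) :
    rho π a ≤ rho π c + 3 ∧ rho π c ≤ rho π a + 3 := by
  have := hst _ _ h1; have := hst _ _ h2; omega

lemma chain2' (hst : Hst π) {a b c : GVertex S} (h1 : (GQS S).Adj a b) (h2 : (GQS S).Adj b c) :
    rho π a ≤ rho π c + 2 ∧ rho π c ≤ rho π a + 2 := by
  have := hst _ _ h1; have := hst _ _ h2; omega

lemma chain3 (hst : Hst π) {a b c d : GVertex S} (h1 : (GQS S).Adj a b) (h2 : (GQS S).Adj b c)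
    (h3 : (GQS S).Adj c d) :
    rho π a ≤ rho π d + 3 ∧ rho π d ≤ rho π a + 3 := by
  have := hst _ _ h1; have := hst _ _ h2; have := hst _ _ h3; omega

lemma memlast (hn : 2 ≤ n) (hSl : S ⟨n - 1, Nat.sub_lt (by omega) Nat.one_pos⟩ = Set.univ) (i : Fin m) : i ∈ S ⟨n - 1, Nat.sub_lt (by omega) Nat.one_pos⟩ := by
  rw [hSl]; trivial

lemma midH (hst : Hst π) (hn : 2 ≤ n) (hSl : S ⟨n - 1, Nat.sub_lt (by omega) Nat.one_pos⟩ = Set.univ) (j : Fin n) (y : GVertex S) :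
    rho π (gH S j) ≤ rho π y + 3 ∧ rho π y ≤ rho π (gH S j) + 3 := by
  set jl : Fin n := ⟨n - 1, Nat.sub_lt (by omega) Nat.one_pos⟩ with hjl
  set j0 : Fin n := ⟨0, by omega⟩ with hj0
  obtain ⟨c, hc⟩ := y
  cases c
  case elt i => exact chain2 hst (aHC j jl) (aEC i jl (memlast hn hSl i)).symm
  case hyp j' => exact chain2 hst (aHC j j0) (aHC j' j0).symm
  case copy k => exact chain1 hst (aHC j k)
  case sub i' j' => exact chain3 hst (aU1H j).symm aQU1.symm (aQS i' j' hc)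
  case qstar => exact chain2 hst (aU1H j).symm aQU1.symm
  case u1 => exact chain1 hst (aU1H j).symm
  case u2 => exact chain1 hst (aU2H j).symm
  case v => exact chain2 hst (aU1H j).symm aU1V
  case w => exact chain2 hst (aHC j j0) (aWC j0).symm

lemma midU1 (hst : Hst π) (hn : 2 ≤ n) (hSl : S ⟨n - 1, Nat.sub_lt (by omega) Nat.one_pos⟩ = Set.univ) (y : GVertex S) :
    rho π (gU1 S) ≤ rho π y + 3 ∧ rho π y ≤ rho π (gU1 S) + 3 := by
  set jl : Fin n := ⟨n - 1, Nat.sub_lt (by omega) Nat.one_pos⟩ with hjl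
  set j0 : Fin n := ⟨0, by omega⟩ with hj0
  obtain ⟨c, hc⟩ := y
  cases c
  case elt i =>
    exact chain3 hst (aU1H jl) (aSH i jl (memlast hn hSl i)).symm (aSE i jl (memlast hn hSl i))
  case hyp j => exact chain1 hst (aU1H j)
  case copy k => exact chain2 hst (aU1H j0) (aHC j0 k)
  case sub i j => exact chain2 hst aQU1.symm (aQS i j hc)
  case qstar => exact chain1 hst aQU1.symm
  case u1 => exact chain2 hst aQU1.symm aQU1
  case u2 => exact chain2 hst aQU1.symm aQU2
  case v => exact chain1 hst aU1V
  case w => exact chain3 hst (aU1H j0) (aHC j0 j0) (aWC j0).symm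

lemma midU2 (hst : Hst π) (hn : 2 ≤ n) (hSl : S ⟨n - 1, Nat.sub_lt (by omega) Nat.one_pos⟩ = Set.univ) (y : GVertex S) :
    rho π (gU2 S) ≤ rho π y + 3 ∧ rho π y ≤ rho π (gU2 S) + 3 := by
  set jl : Fin n := ⟨n - 1, Nat.sub_lt (by omega) Nat.one_pos⟩ with hjl
  set j0 : Fin n := ⟨0, by omega⟩ with hj0
  obtain ⟨c, hc⟩ := y
  cases c
  case elt i =>
    exact chain3 hst (aU2H jl) (aSH i jl (memlast hn hSl i)).symm (aSE i jl (memlast hn hSl i))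
  case hyp j => exact chain1 hst (aU2H j)
  case copy k => exact chain2 hst (aU2H j0) (aHC j0 k)
  case sub i j => exact chain2 hst aQU2.symm (aQS i j hc)
  case qstar => exact chain1 hst aQU2.symm
  case u1 => exact chain2 hst aQU2.symm aQU1
  case u2 => exact chain2 hst aQU2.symm aQU2
  case v => exact chain1 hst aU2V
  case w => exact chain3 hst (aU2H j0) (aHC j0 j0) (aWC j0).symm

lemma midC (hst : Hst π) (hn : 2 ≤ n) (hSl : S ⟨n - 1, Nat.sub_lt (by omega) Nat.one_pos⟩ = Set.univ) (k : Fin n) (y : GVertex S) :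
    rho π (gC S k) ≤ rho π y + 3 ∧ rho π y ≤ rho π (gC S k) + 3 := by
  set jl : Fin n := ⟨n - 1, Nat.sub_lt (by omega) Nat.one_pos⟩ with hjl
  set j0 : Fin n := ⟨0, by omega⟩ with hj0
  obtain ⟨c, hc⟩ := y
  cases c
  case elt i => exact chain3 hst (aHC jl k).symm (aHC jl jl) (aEC i jl (memlast hn hSl i)).symm
  case hyp j => exact chain1 hst (aHC j k).symm
  case copy k' => exact chain2 hst (aHC j0 k).symm (aHC j0 k')
  case sub i j => exact chain2 hst (aHC j k).symm (aSH i j hc).symm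
  case qstar => exact chain3 hst (aHC j0 k).symm (aU1H j0).symm aQU1.symm
  case u1 => exact chain2 hst (aHC j0 k).symm (aU1H j0).symm
  case u2 => exact chain2 hst (aHC j0 k).symm (aU2H j0).symm
  case v => exact chain3 hst (aHC j0 k).symm (aU1H j0).symm aU1V
  case w => exact chain1 hst (aWC k).symm

lemma midS (hst : Hst π) (hn : 2 ≤ n) (hSl : S ⟨n - 1, Nat.sub_lt (by omega) Nat.one_pos⟩ = Set.univ) (i : Fin m) (j : Fin n) (hm : i ∈ S j) (y : GVertex S) :
    rho π (gS S i j hm) ≤ rho π y + 3 ∧ rho π y ≤ rho π (gS S i j hm) + 3 := by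
  set jl : Fin n := ⟨n - 1, Nat.sub_lt (by omega) Nat.one_pos⟩ with hjl
  set j0 : Fin n := ⟨0, by omega⟩ with hj0
  obtain ⟨c, hc⟩ := y
  cases c
  case elt i' =>
    exact chain3 hst (aSE i j hm) (aEC i jl (memlast hn hSl i))
      (aEC i' jl (memlast hn hSl i')).symm
  case hyp j' => exact chain3 hst (aSH i j hm) (aHC j j0) (aHC j' j0).symm
  case copy k => exact chain2 hst (aSH i j hm) (aHC j k)
  case sub i' j' => exact chain2 hst (aQS i j hm).symm (aQS i' j' hc)
  case qstar => exact chain1 hst (aQS i j hm).symm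
  case u1 => exact chain2 hst (aQS i j hm).symm aQU1
  case u2 => exact chain2 hst (aQS i j hm).symm aQU2
  case v => exact chain3 hst (aQS i j hm).symm aQU1 aU1V
  case w => exact chain3 hst (aSH i j hm) (aHC j j0) (aWC j0).symm

end chains

variable {m n : ℕ} {S : Fin n → Set (Fin m)} {π : GVertex S → Fin 5}

lemma cls (hst : Hst π) (hn : 2 ≤ n) (hSl : S ⟨n - 1, Nat.sub_lt (by omega) Nat.one_pos⟩ = Set.univ)
    (x y : GVertex S) (hx : rho π x = 0) (hy : rho π y = 4) :
    (x = gV S ∧ (y = gW S ∨ ∃ i, y = gE S i)) ∨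
    (x = gW S ∧ (y = gV S ∨ y = gQ S)) ∨
    (x = gQ S ∧ y = gW S) ∨
    ((∃ i, x = gE S i) ∧ y = gV S) := by
  set jl : Fin n := ⟨n - 1, Nat.sub_lt (by omega) Nat.one_pos⟩ with hjl
  have hml : ∀ i : Fin m, i ∈ S jl := memlast hn hSl
  obtain ⟨cx, hcx⟩ := x
  cases cx
  case hyp j =>
    exfalso
    have h1 := midH hst hn hSl j y
    have hx' : rho π (gH S j) = 0 := hx
    omega
  case copy k =>
    exfalso
    have h1 := midC hst hn hSl k y
    have hx' : rho π (gC S k) = 0 := hx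
    omega
  case sub i j =>
    exfalso
    have h1 := midS hst hn hSl i j hcx y
    have hx' : rho π (gS S i j hcx) = 0 := hx
    omega
  case u1 =>
    exfalso
    have h1 := midU1 hst hn hSl y
    have hx' : rho π (gU1 S) = 0 := hx
    omega
  case u2 =>
    exfalso
    have h1 := midU2 hst hn hSl y
    have hx' : rho π (gU2 S) = 0 := hx
    omega
  case elt i =>
    obtain ⟨cy, hcy⟩ := y
    cases cy
    case hyp j =>
      exfalso
      have h1 := midH hst hn hSl j (⟨HVertex.elt i, hcx⟩ : GVertex S)
      have hy' : rho π (gH S j) = 4 := hy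
      omega
    case copy k =>
      exfalso
      have h1 := midC hst hn hSl k (⟨HVertex.elt i, hcx⟩ : GVertex S)
      have hy' : rho π (gC S k) = 4 := hy
      omega
    case sub i' j' =>
      exfalso
      have h1 := midS hst hn hSl i' j' hcy (⟨HVertex.elt i, hcx⟩ : GVertex S)
      have hy' : rho π (gS S i' j' hcy) = 4 := hy
      omega
    case u1 =>
      exfalso
      have h1 := midU1 hst hn hSl (⟨HVertex.elt i, hcx⟩ : GVertex S)
      have hy' : rho π (gU1 S) = 4 := hy
      omega
    case u2 =>
      exfalso
      have h1 := midU2 hst hn hSl (⟨HVertex.elt i, hcx⟩ : GVertex S)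
      have hy' : rho π (gU2 S) = 4 := hy
      omega
    case elt i' =>
      exfalso
      have h1 := chain2' hst (aEC i jl (hml i)) (aEC i' jl (hml i')).symm
      have hx' : rho π (gE S i) = 0 := hx
      have hy' : rho π (gE S i') = 4 := hy
      omega
    case qstar =>
      exfalso
      have h1 := chain2' hst (aSE i jl (hml i)).symm (aQS i jl (hml i)).symm
      have hx' : rho π (gE S i) = 0 := hx
      have hy' : rho π (gQ S) = 4 := hy
      omega
    case v => exact Or.inr (Or.inr (Or.inr ⟨⟨i, rfl⟩, rfl⟩))
    case w =>
      exfalso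
      have h1 := chain2' hst (aEC i jl (hml i)) (aWC jl).symm
      have hx' : rho π (gE S i) = 0 := hx
      have hy' : rho π (gW S) = 4 := hy
      omega
  case qstar =>
    obtain ⟨cy, hcy⟩ := y
    cases cy
    case hyp j =>
      exfalso
      have h1 := midH hst hn hSl j (⟨HVertex.qstar, hcx⟩ : GVertex S)
      have hy' : rho π (gH S j) = 4 := hy
      omega
    case copy k =>
      exfalso
      have h1 := midC hst hn hSl k (⟨HVertex.qstar, hcx⟩ : GVertex S)
      have hy' : rho π (gC S k) = 4 := hy
      omega
    case sub i' j' =>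
      exfalso
      have h1 := midS hst hn hSl i' j' hcy (⟨HVertex.qstar, hcx⟩ : GVertex S)
      have hy' : rho π (gS S i' j' hcy) = 4 := hy
      omega
    case u1 =>
      exfalso
      have h1 := midU1 hst hn hSl (⟨HVertex.qstar, hcx⟩ : GVertex S)
      have hy' : rho π (gU1 S) = 4 := hy
      omega
    case u2 =>
      exfalso
      have h1 := midU2 hst hn hSl (⟨HVertex.qstar, hcx⟩ : GVertex S)
      have hy' : rho π (gU2 S) = 4 := hy
      omega
    case elt i' =>
      exfalso
      have h1 := chain2' hst (aQS i' jl (hml i')) (aSE i' jl (hml i'))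
      have hx' : rho π (gQ S) = 0 := hx
      have hy' : rho π (gE S i') = 4 := hy
      omega
    case qstar =>
      exfalso
      have hy' : rho π (⟨HVertex.qstar, hcx⟩ : GVertex S) = 4 := hy
      omega
    case v =>
      exfalso
      have h1 := chain2' hst aQU1 aU1V
      have hx' : rho π (gQ S) = 0 := hx
      have hy' : rho π (gV S) = 4 := hy
      omega
    case w => exact Or.inr (Or.inr (Or.inl ⟨rfl, rfl⟩))
  case v =>
    obtain ⟨cy, hcy⟩ := y
    cases cy
    case hyp j =>
      exfalso
      have h1 := midH hst hn hSl j (⟨HVertex.v, hcx⟩ : GVertex S)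
      have hy' : rho π (gH S j) = 4 := hy
      omega
    case copy k =>
      exfalso
      have h1 := midC hst hn hSl k (⟨HVertex.v, hcx⟩ : GVertex S)
      have hy' : rho π (gC S k) = 4 := hy
      omega
    case sub i' j' =>
      exfalso
      have h1 := midS hst hn hSl i' j' hcy (⟨HVertex.v, hcx⟩ : GVertex S)
      have hy' : rho π (gS S i' j' hcy) = 4 := hy
      omega
    case u1 =>
      exfalso
      have h1 := midU1 hst hn hSl (⟨HVertex.v, hcx⟩ : GVertex S)
      have hy' : rho π (gU1 S) = 4 := hy
      omega
    case u2 =>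
      exfalso
      have h1 := midU2 hst hn hSl (⟨HVertex.v, hcx⟩ : GVertex S)
      have hy' : rho π (gU2 S) = 4 := hy
      omega
    case elt i' => exact Or.inl ⟨rfl, Or.inr ⟨i', rfl⟩⟩
    case qstar =>
      exfalso
      have h1 := chain2' hst aU1V.symm aQU1.symm
      have hx' : rho π (gV S) = 0 := hx
      have hy' : rho π (gQ S) = 4 := hy
      omega
    case v =>
      exfalso
      have hy' : rho π (⟨HVertex.v, hcx⟩ : GVertex S) = 4 := hy
      omega
    case w => exact Or.inl ⟨rfl, Or.inl rfl⟩
  case w =>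
    obtain ⟨cy, hcy⟩ := y
    cases cy
    case hyp j =>
      exfalso
      have h1 := midH hst hn hSl j (⟨HVertex.w, hcx⟩ : GVertex S)
      have hy' : rho π (gH S j) = 4 := hy
      omega
    case copy k =>
      exfalso
      have h1 := midC hst hn hSl k (⟨HVertex.w, hcx⟩ : GVertex S)
      have hy' : rho π (gC S k) = 4 := hy
      omega
    case sub i' j' =>
      exfalso
      have h1 := midS hst hn hSl i' j' hcy (⟨HVertex.w, hcx⟩ : GVertex S)
      have hy' : rho π (gS S i' j' hcy) = 4 := hy
      omega
    case u1 =>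
      exfalso
      have h1 := midU1 hst hn hSl (⟨HVertex.w, hcx⟩ : GVertex S)
      have hy' : rho π (gU1 S) = 4 := hy
      omega
    case u2 =>
      exfalso
      have h1 := midU2 hst hn hSl (⟨HVertex.w, hcx⟩ : GVertex S)
      have hy' : rho π (gU2 S) = 4 := hy
      omega
    case elt i' =>
      exfalso
      have h1 := chain2' hst (aWC jl) (aEC i' jl (hml i')).symm
      have hx' : rho π (gW S) = 0 := hx
      have hy' : rho π (gE S i') = 4 := hy
      omega
    case qstar => exact Or.inr (Or.inl ⟨rfl, Or.inr rfl⟩)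
    case v => exact Or.inr (Or.inl ⟨rfl, Or.inl rfl⟩)
    case w =>
      exfalso
      have hy' : rho π (⟨HVertex.w, hcx⟩ : GVertex S) = 4 := hy
      omega

variable {m n : ℕ} {S : Fin n → Set (Fin m)}

lemma reach_closed {V' : Type*} {G : SimpleGraph V'} {P : V' → Prop}
    (hP : ∀ a b, P a → G.Adj a b → P b) {x y : V'} (h : G.Reachable x y) (hx : P x) : P y := by
  obtain ⟨wk⟩ := h
  induction wk with
  | nil => exact hx
  | cons hadj p ih => exact ih (hP _ _ hx hadj)

lemma disconn {V' : Type*} (G : SimpleGraph V') (s : Set V') (hc : (G.induce s).Connected)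
    (A : Set V') {x y : V'} (hx : x ∈ s) (hy : y ∈ s) (hxA : x ∈ A) (hyA : y ∉ A)
    (hcl : ∀ a b : V', a ∈ A → a ∈ s → b ∈ s → G.Adj a b → b ∈ A) : False := by
  have hr : (G.induce s).Reachable ⟨x, hx⟩ ⟨y, hy⟩ := hc.preconnected _ _
  refine hyA (reach_closed (G := G.induce s) (P := fun z => z.1 ∈ A) ?_ hr hxA)
  intro a b ha hab
  exact hcl a.1 b.1 ha a.2 b.2 hab

lemma isolated {V' : Type*} (G : SimpleGraph V') (s : Set V') (hc : (G.induce s).Connected)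
    {x y : V'} (hx : x ∈ s) (hy : y ∈ s) (hxy : x ≠ y)
    (hno : ∀ b, b ∈ s → ¬ G.Adj x b) : False := by
  refine disconn G s hc {x} hx hy rfl (fun h => hxy (Set.mem_singleton_iff.mp h).symm) ?_
  intro a b ha _ hbs hab
  rw [Set.mem_singleton_iff] at ha
  subst ha
  exact absurd hab (hno b hbs)

lemma gne {a b : HVertex m n} {ha : a.OK S} {hb : b.OK S}
    (h : (⟨a, ha⟩ : GVertex S) = ⟨b, hb⟩) : a = b := congrArg Subtype.val h

lemma memW (W : Fin 5 → Set (GVertex S)) (π : GVertex S → Fin 5)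
    (hπ : ∀ x, x ∈ W (π x)) (z : GVertex S) (k : Fin 5) (h : rho π z = k.val) : z ∈ W k := by
  have : π z = k := Fin.ext h
  rw [← this]; exact hπ z

lemma valW (W : Fin 5 → Set (GVertex S)) (π : GVertex S → Fin 5)
    (huq : ∀ z k, z ∈ W k → π z = k) (z : GVertex S) (k : Fin 5) (h : z ∈ W k) :
    rho π z = k.val := congrArg Fin.val (huq z k h)


variable {m n : ℕ} {S : Fin n → Set (Fin m)}

lemma mainCase (hn : 2 ≤ n) (hSl : S ⟨n - 1, Nat.sub_lt (by omega) Nat.one_pos⟩ = Set.univ)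
    (W : Fin 5 → Set (GVertex S)) (π : GVertex S → Fin 5)
    (hπ : ∀ x, x ∈ W (π x)) (huq : ∀ z k, z ∈ W k → π z = k)
    (hst : Hst π) (hcn : ∀ k, ((GQS S).induce (W k)).Connected)
    (hv0 : rho π (gV S) = 0) (h0 : ∀ z, rho π z = 0 → z = gV S)
    (hw4 : rho π (gW S) = 4) (h4 : ∀ z, rho π z = 4 → z = gW S) :
    ∃ Q₁ Q₂ : Set (Fin m), IsTwoColouring S Q₁ Q₂ := by
  set jl : Fin n := ⟨n - 1, Nat.sub_lt (by omega) Nat.one_pos⟩ with hjl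
  set j0 : Fin n := ⟨0, by omega⟩ with hj0
  have hml : ∀ i : Fin m, i ∈ S jl := memlast hn hSl
  have rle : ∀ z, rho π z ≤ 4 := fun z => Nat.lt_succ_iff.mp (π z).isLt
  have ru1 : rho π (gU1 S) = 1 := by
    have h1 := hst _ _ (aU1V (S := S))
    have h2 : rho π (gU1 S) ≠ 0 := fun h => (nomatch gne (h0 _ h))
    omega
  have ru2 : rho π (gU2 S) = 1 := by
    have h1 := hst _ _ (aU2V (S := S))
    have h2 : rho π (gU2 S) ≠ 0 := fun h => (nomatch gne (h0 _ h))
    omega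
  have rc : ∀ k, rho π (gC S k) = 3 := by
    intro k
    have h1 := hst _ _ (aWC (S := S) k)
    have h2 : rho π (gC S k) ≠ 4 := fun h => (nomatch gne (h4 _ h))
    have h3 := rle (gC S k)
    omega
  have rh : ∀ j, rho π (gH S j) = 2 := by
    intro j
    have h1 := hst _ _ (aU1H (S := S) j)
    have h2 := hst _ _ (aHC (S := S) j j0)
    have h3 := rc j0
    omega
  have re : ∀ i, 2 ≤ rho π (gE S i) ∧ rho π (gE S i) ≤ 3 := by
    intro i
    have h1 := hst _ _ (aEC i jl (hml i))
    have h2 : rho π (gE S i) ≠ 4 := fun h => (nomatch gne (h4 _ h))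
    have h3 := rc jl
    have h5 := rle (gE S i)
    omega
  have hq12 : 1 ≤ rho π (gQ S) ∧ rho π (gQ S) ≤ 2 := by
    have h1 := hst _ _ (aQU1 (S := S))
    have h2 : rho π (gQ S) ≠ 0 := fun h => (nomatch gne (h0 _ h))
    omega
  have rq : rho π (gQ S) = 1 := by
    by_contra hq
    refine isolated (GQS S) (W ⟨1, by omega⟩) (hcn _) (x := gU1 S) (y := gU2 S)
      (memW W π hπ _ _ ru1) (memW W π hπ _ _ ru2)
      (fun h => (nomatch gne h)) ?_
    intro b hb hadj
    have hb1 : rho π b = 1 := valW W π huq _ _ hb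
    rcases nbr_u1 b hadj with rfl | rfl | ⟨j, rfl⟩
    · omega
    · omega
    · have := rh j; omega
  refine ⟨{i | rho π (gE S i) = 2}, {i | rho π (gE S i) = 3}, ?_, ?_, ?_⟩
  · refine Set.eq_univ_of_forall ?_
    intro i
    have := re i
    simp only [Set.mem_union, Set.mem_setOf_eq]
    omega
  · rw [Set.disjoint_left]
    intro i h1 h2
    simp only [Set.mem_setOf_eq] at h1 h2
    omega
  · intro j
    have hkex : ∃ k : Fin n, k ≠ j := by
      by_cases hj : j.val = 0
      · exact ⟨jl, Fin.ne_of_val_ne (by simp only [hjl]; omega)⟩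
      · exact ⟨j0, Fin.ne_of_val_ne (by simp only [hj0]; omega)⟩
    obtain ⟨k, hkj⟩ := hkex
    constructor
    · by_contra hcon
      rw [Set.not_nonempty_iff_eq_empty, Set.eq_empty_iff_forall_notMem] at hcon
      refine disconn (GQS S) (W ⟨2, by omega⟩) (hcn _)
        {z : GVertex S | z.1 = HVertex.hyp j ∨ ∃ i, z.1 = HVertex.sub i j}
        (x := gH S j) (y := gH S k)
        (memW W π hπ _ _ (rh j)) (memW W π hπ _ _ (rh k)) (Or.inl rfl) ?_ ?_
      · rintro (h | ⟨i, h⟩)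
        · have h' : HVertex.hyp k = HVertex.hyp j := h
          injection h' with h''
          exact hkj (Fin.ext (congrArg Fin.val h''))
        · exact (nomatch show HVertex.hyp k = HVertex.sub i j from h)
      · intro a b haA has hbs hadj
        have hb2 : rho π b = 2 := valW W π huq _ _ hbs
        obtain ⟨ca, hca⟩ := a
        rcases haA with h | ⟨i, h⟩
        · have h' : ca = HVertex.hyp j := h
          subst h'
          rcases nbr_hyp j b hadj with rfl | rfl | ⟨kk, rfl⟩ | ⟨i, hm', rfl⟩
          · omega
          · omega
          · have := rc kk; omega
          · exact Or.inr ⟨i, rfl⟩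
        · have h' : ca = HVertex.sub i j := h
          subst h'
          rcases nbr_sub i j hca b hadj with rfl | rfl | rfl
          · exact (hcon i ⟨hb2, hca⟩).elim
          · exact Or.inl rfl
          · omega
    · by_contra hcon
      rw [Set.not_nonempty_iff_eq_empty, Set.eq_empty_iff_forall_notMem] at hcon
      refine isolated (GQS S) (W ⟨3, by omega⟩) (hcn _) (x := gC S j) (y := gC S k)
        (memW W π hπ _ _ (rc j)) (memW W π hπ _ _ (rc k)) ?_ ?_
      · intro h
        have h' : HVertex.copy j = HVertex.copy k := gne h
        injection h' with h''
        exact hkj (Fin.ext (congrArg Fin.val h'')).symm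
      · intro b hb hadj
        have hb3 : rho π b = 3 := valW W π huq _ _ hb
        rcases nbr_copy j b hadj with ⟨i, hi, rfl⟩ | ⟨jj, rfl⟩ | rfl
        · exact hcon i ⟨hb3, hi⟩
        · have := rh jj; omega
        · omega

lemma caseB (hn : 2 ≤ n) (hSl : S ⟨n - 1, Nat.sub_lt (by omega) Nat.one_pos⟩ = Set.univ)
    (W : Fin 5 → Set (GVertex S)) (π : GVertex S → Fin 5)
    (hπ : ∀ x, x ∈ W (π x)) (huq : ∀ z k, z ∈ W k → π z = k)
    (hst : Hst π) (hcn : ∀ k, ((GQS S).induce (W k)).Connected)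
    (i0 : Fin m)
    (hv0 : rho π (gV S) = 0) (h0 : ∀ z, rho π z = 0 → z = gV S)
    (he4 : rho π (gE S i0) = 4) (h4 : ∀ z, rho π z = 4 → z = gE S i0) : False := by
  set jl : Fin n := ⟨n - 1, Nat.sub_lt (by omega) Nat.one_pos⟩ with hjl
  have hml : ∀ i : Fin m, i ∈ S jl := memlast hn hSl
  have rle : ∀ z, rho π z ≤ 4 := fun z => Nat.lt_succ_iff.mp (π z).isLt
  have ru1 : rho π (gU1 S) = 1 := by
    have h1 := hst _ _ (aU1V (S := S))
    have h2 : rho π (gU1 S) ≠ 0 := fun h => (nomatch gne (h0 _ h))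
    omega
  have ru2 : rho π (gU2 S) = 1 := by
    have h1 := hst _ _ (aU2V (S := S))
    have h2 : rho π (gU2 S) ≠ 0 := fun h => (nomatch gne (h0 _ h))
    omega
  have rcl : rho π (gC S jl) = 3 := by
    have h1 := hst _ _ (aEC i0 jl (hml i0))
    have h2 : rho π (gC S jl) ≠ 4 := fun h => (nomatch gne (h4 _ h))
    have h3 := rle (gC S jl)
    omega
  have rh : ∀ j, rho π (gH S j) = 2 := by
    intro j
    have h1 := hst _ _ (aU1H (S := S) j)
    have h2 := hst _ _ (aHC (S := S) j jl)
    omega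
  have rsb : rho π (gS S i0 jl (hml i0)) = 3 := by
    have h1 := hst _ _ (aSE i0 jl (hml i0))
    have h2 : rho π (gS S i0 jl (hml i0)) ≠ 4 :=
      fun h => (nomatch gne (h4 _ h))
    have h3 := rle (gS S i0 jl (hml i0))
    omega
  have rq : rho π (gQ S) = 2 := by
    have h1 := hst _ _ (aQU1 (S := S))
    have h2 : rho π (gQ S) ≠ 0 := fun h => (nomatch gne (h0 _ h))
    have h3 := hst _ _ (aQS i0 jl (hml i0))
    omega
  refine isolated (GQS S) (W ⟨1, by omega⟩) (hcn _) (x := gU1 S) (y := gU2 S)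
    (memW W π hπ _ _ ru1) (memW W π hπ _ _ ru2)
    (fun h => (nomatch gne h)) ?_
  intro b hb hadj
  have hb1 : rho π b = 1 := valW W π huq _ _ hb
  rcases nbr_u1 b hadj with rfl | rfl | ⟨j, rfl⟩
  · omega
  · omega
  · have := rh j; omega

lemma caseC (hn : 2 ≤ n) (hSl : S ⟨n - 1, Nat.sub_lt (by omega) Nat.one_pos⟩ = Set.univ)
    (hSne : ∀ j, (S j).Nonempty)
    (W : Fin 5 → Set (GVertex S)) (π : GVertex S → Fin 5)
    (hπ : ∀ x, x ∈ W (π x)) (huq : ∀ z k, z ∈ W k → π z = k)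
    (hst : Hst π) (hcn : ∀ k, ((GQS S).induce (W k)).Connected)
    (hw0 : rho π (gW S) = 0) (h0 : ∀ z, rho π z = 0 → z = gW S)
    (hq4 : rho π (gQ S) = 4) (h4 : ∀ z, rho π z = 4 → z = gQ S) : False := by
  set jl : Fin n := ⟨n - 1, Nat.sub_lt (by omega) Nat.one_pos⟩ with hjl
  set j0 : Fin n := ⟨0, by omega⟩ with hj0
  have hml : ∀ i : Fin m, i ∈ S jl := memlast hn hSl
  obtain ⟨i0, _⟩ := hSne j0
  have rle : ∀ z, rho π z ≤ 4 := fun z => Nat.lt_succ_iff.mp (π z).isLt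
  have ru1 : rho π (gU1 S) = 3 := by
    have h1 := hst _ _ (aQU1 (S := S))
    have h2 : rho π (gU1 S) ≠ 4 := fun h => (nomatch gne (h4 _ h))
    have h3 := rle (gU1 S)
    omega
  have rsb : rho π (gS S i0 jl (hml i0)) = 3 := by
    have h1 := hst _ _ (aQS i0 jl (hml i0))
    have h2 : rho π (gS S i0 jl (hml i0)) ≠ 4 :=
      fun h => (nomatch gne (h4 _ h))
    have h3 := rle (gS S i0 jl (hml i0))
    omega
  have rcl : ∀ k, rho π (gC S k) = 1 := by
    intro k
    have h1 := hst _ _ (aWC (S := S) k)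
    have h2 : rho π (gC S k) ≠ 0 := fun h => (nomatch gne (h0 _ h))
    omega
  have rh : ∀ j, rho π (gH S j) = 2 := by
    intro j
    have h1 := hst _ _ (aU1H (S := S) j)
    have h2 := hst _ _ (aHC (S := S) j j0)
    have h3 := rcl j0
    omega
  have rel : rho π (gE S i0) = 2 := by
    have h1 := hst _ _ (aEC i0 jl (hml i0))
    have h2 := hst _ _ (aSE i0 jl (hml i0))
    have h3 := rcl jl
    omega
  refine isolated (GQS S) (W ⟨3, by omega⟩) (hcn _) (x := gS S i0 jl (hml i0)) (y := gU1 S)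
    (memW W π hπ _ _ rsb) (memW W π hπ _ _ ru1)
    (fun h => (nomatch gne h)) ?_
  intro b hb hadj
  have hb3 : rho π b = 3 := valW W π huq _ _ hb
  rcases nbr_sub i0 jl (hml i0) b hadj with rfl | rfl | rfl
  · omega
  · have := rh jl; omega
  · omega


variable {m n : ℕ} {S : Fin n → Set (Fin m)}

def rv5 : Fin 5 → Fin 5 := fun k => ⟨4 - k.val, by omega⟩

lemma rv5_rv5 (k : Fin 5) : rv5 (rv5 k) = k := by
  have := k.isLt
  exact Fin.ext (by simp only [rv5]; omega)

lemma rev_hπ (W : Fin 5 → Set (GVertex S)) (π : GVertex S → Fin 5)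
    (hπ : ∀ x, x ∈ W (π x)) : ∀ x, x ∈ W (rv5 (rv5 (π x))) := by
  intro x; rw [rv5_rv5]; exact hπ x

lemma rev_huq (W : Fin 5 → Set (GVertex S)) (π : GVertex S → Fin 5)
    (huq : ∀ z k, z ∈ W k → π z = k) : ∀ z k, z ∈ W (rv5 k) → rv5 (π z) = k := by
  intro z k hk
  rw [huq z (rv5 k) hk, rv5_rv5]

lemma rev_hst (π : GVertex S → Fin 5) (hst : Hst π) : Hst (fun z => rv5 (π z)) := by
  intro a b hab
  have h1 := hst a b hab
  have ha : rho π a ≤ 4 := Nat.lt_succ_iff.mp (π a).isLt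
  have hb : rho π b ≤ 4 := Nat.lt_succ_iff.mp (π b).isLt
  show 4 - rho π a ≤ (4 - rho π b) + 1 ∧ 4 - rho π b ≤ (4 - rho π a) + 1
  omega

lemma half (hn : 2 ≤ n) (hSl : S ⟨n - 1, Nat.sub_lt (by omega) Nat.one_pos⟩ = Set.univ)
    (W : Fin 5 → Set (GVertex S)) (π : GVertex S → Fin 5)
    (hπ : ∀ x, x ∈ W (π x)) (huq : ∀ z k, z ∈ W k → π z = k)
    (hst : Hst π) (hcn : ∀ k, ((GQS S).induce (W k)).Connected)
    (hv0 : rho π (gV S) = 0) (y0 : GVertex S) (hy4 : rho π y0 = 4) :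
    ∃ Q₁ Q₂ : Set (Fin m), IsTwoColouring S Q₁ Q₂ := by
  by_cases hw4 : rho π (gW S) = 4
  · -- main case: prune the end bags to singletons
    have hnotend4 : ∀ z, rho π z = 4 → z = gW S ∨ ∃ i, z = gE S i := by
      intro z hz
      rcases cls hst hn hSl (gV S) z hv0 hz with ⟨_, h⟩ | ⟨h, _⟩ | ⟨h, _⟩ | ⟨⟨i, h⟩, _⟩
      · exact h
      · exact (nomatch gne h)
      · exact (nomatch gne h)
      · exact (nomatch gne h)
    have hq0 : rho π (gQ S) ≠ 0 := by
      intro hq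
      refine isolated (GQS S) (W ⟨0, by omega⟩) (hcn _) (x := gV S) (y := gQ S)
        (memW W π hπ _ _ hv0) (memW W π hπ _ _ hq)
        (fun h => (nomatch gne h)) ?_
      intro b hb hadj
      have hb0 : rho π b = 0 := valW W π huq _ _ hb
      rcases nbr_v b hadj with rfl | rfl <;>
        · rcases cls hst hn hSl _ y0 hb0 hy4 with ⟨h, _⟩ | ⟨h, _⟩ | ⟨h, _⟩ | ⟨⟨i, h⟩, _⟩ <;>
            exact (nomatch gne h)
    have h0 : ∀ z, rho π z = 0 → z = gV S := by
      intro z hz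
      rcases cls hst hn hSl z y0 hz hy4 with ⟨h, _⟩ | ⟨h, _⟩ | ⟨h, _⟩ | ⟨_, hy⟩
      · exact h
      · rw [h] at hz; omega
      · rw [h] at hz; exact absurd hz hq0
      · rw [hy] at hy4; omega
    have hE4 : ∀ i, rho π (gE S i) ≠ 4 := by
      intro i hi
      refine isolated (GQS S) (W ⟨4, by omega⟩) (hcn _) (x := gW S) (y := gE S i)
        (memW W π hπ _ _ hw4) (memW W π hπ _ _ hi)
        (fun h => (nomatch gne h)) ?_
      intro b hb hadj
      have hb4 : rho π b = 4 := valW W π huq _ _ hb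
      obtain ⟨kk, rfl⟩ := nbr_w b hadj
      rcases hnotend4 _ hb4 with h | ⟨i', h⟩ <;> exact (nomatch gne h)
    have h4 : ∀ z, rho π z = 4 → z = gW S := by
      intro z hz
      rcases hnotend4 z hz with h | ⟨i, rfl⟩
      · exact h
      · exact absurd hz (hE4 i)
    exact mainCase hn hSl W π hπ huq hst hcn hv0 h0 hw4 h4
  · -- the other end is a single element vertex : contradiction via caseB
    rcases cls hst hn hSl (gV S) y0 hv0 hy4 with ⟨_, hy | ⟨i0, hy⟩⟩ | ⟨h, _⟩ | ⟨h, _⟩ | ⟨⟨i, h⟩, _⟩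
    · exact absurd (hy ▸ hy4) hw4
    · subst hy
      have h0 : ∀ z, rho π z = 0 → z = gV S := by
        intro z hz
        rcases cls hst hn hSl z (gE S i0) hz hy4 with ⟨h, _⟩ | ⟨_, hy | hy⟩ | ⟨_, hy⟩ | ⟨_, hy⟩
        · exact h
        · exact (nomatch gne hy)
        · exact (nomatch gne hy)
        · exact (nomatch gne hy)
        · exact (nomatch gne hy)
      have h4 : ∀ z, rho π z = 4 → z = gE S i0 := by
        intro z hz
        rcases cls hst hn hSl (gV S) z hv0 hz with ⟨_, hy | ⟨i', rfl⟩⟩ | ⟨h, _⟩ | ⟨h, _⟩ | ⟨⟨i', h⟩, _⟩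
        · exact absurd (hy ▸ hz) hw4
        · by_cases hii : i' = i0
          · rw [hii]
          · exfalso
            refine isolated (GQS S) (W ⟨4, by omega⟩) (hcn _) (x := gE S i') (y := gE S i0)
              (memW W π hπ _ _ hz) (memW W π hπ _ _ hy4) ?_ ?_
            · intro h
              have h' : HVertex.elt i' = HVertex.elt i0 := gne h
              injection h' with h''
              exact hii h''
            · intro b hb hadj
              have hb4 : rho π b = 4 := valW W π huq _ _ hb
              rcases nbr_elt i' b hadj with ⟨k, rfl⟩ | ⟨j, hm', rfl⟩ <;>
                · rcases cls hst hn hSl (gV S) _ hv0 hb4 with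
                    ⟨_, h | ⟨i'', h⟩⟩ | ⟨h, _⟩ | ⟨h, _⟩ | ⟨⟨i'', h⟩, _⟩ <;>
                    exact (nomatch gne h)
        · exact (nomatch gne h)
        · exact (nomatch gne h)
        · exact (nomatch gne h)
      exact (caseB hn hSl W π hπ huq hst hcn i0 hv0 h0 hy4 h4).elim
    · exact (nomatch gne h)
    · exact (nomatch gne h)
    · exact (nomatch gne h)

lemma caseWQ (hn : 2 ≤ n) (hSl : S ⟨n - 1, Nat.sub_lt (by omega) Nat.one_pos⟩ = Set.univ)
    (hSne : ∀ j, (S j).Nonempty)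
    (W : Fin 5 → Set (GVertex S)) (π : GVertex S → Fin 5)
    (hπ : ∀ x, x ∈ W (π x)) (huq : ∀ z k, z ∈ W k → π z = k)
    (hst : Hst π) (hcn : ∀ k, ((GQS S).induce (W k)).Connected)
    (hw0 : rho π (gW S) = 0) (hq4 : rho π (gQ S) = 4) :
    ∃ Q₁ Q₂ : Set (Fin m), IsTwoColouring S Q₁ Q₂ := by
  by_cases hv4 : rho π (gV S) = 4
  · refine half hn hSl (fun k => W (rv5 k)) (fun z => rv5 (π z))
      (rev_hπ W π hπ) (rev_huq W π huq) (rev_hst π hst) (fun k => hcn (rv5 k))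
      ?_ (gW S) ?_
    · show 4 - rho π (gV S) = 0; rw [hv4]
    · show 4 - rho π (gW S) = 4; rw [hw0]
  · have h4q : ∀ z, rho π z = 4 → z = gQ S := by
      intro z hz
      rcases cls hst hn hSl (gW S) z hw0 hz with ⟨h, _⟩ | ⟨_, hy | hy⟩ | ⟨h, _⟩ | ⟨⟨i, h⟩, _⟩
      · exact (nomatch gne h)
      · exact absurd (hy ▸ hz) hv4
      · exact hy
      · exact (nomatch gne h)
      · exact (nomatch gne h)
    have h0w : ∀ z, rho π z = 0 → z = gW S := by
      intro z hz
      rcases cls hst hn hSl z (gQ S) hz hq4 with ⟨_, hy | ⟨i, hy⟩⟩ | ⟨h, _⟩ | ⟨_, hy⟩ | ⟨_, hy⟩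
      · exact (nomatch gne hy)
      · exact (nomatch gne hy)
      · exact h
      · exact (nomatch gne hy)
      · exact (nomatch gne hy)
    exact (caseC hn hSl hSne W π hπ huq hst hcn hw0 h0w hq4 h4q).elim

end PfAux

theorem stmt_13 {m n : ℕ} (S : Fin n → Set (Fin m)) (hn : 2 ≤ n)
    (hSne : ∀ j, (S j).Nonempty) (hSlast : S ⟨n - 1, by omega⟩ = Set.univ)
    (h : ContainsAsContraction (GQS S) (SimpleGraph.pathGraph 5)) :
    ∃ Q₁ Q₂ : Set (Fin m), IsTwoColouring S Q₁ Q₂ := by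
  open PfAux in
  obtain ⟨W, hne, hdisj, hcov, hconn, hadj⟩ := h
  choose π hπ using Set.iUnion_eq_univ_iff.mp hcov
  have huq : ∀ z k, z ∈ W k → π z = k := by
    intro z k hk
    by_contra hne'
    exact Set.disjoint_left.mp (hdisj _ _ hne') (hπ z) hk
  have hst : PfAux.Hst π := by
    intro a b hab
    by_cases he : π a = π b
    · show (π a).val ≤ (π b).val + 1 ∧ (π b).val ≤ (π a).val + 1
      rw [he]; omega
    · have hA := (hadj _ _ he).mp ⟨a, hπ a, b, hπ b, hab⟩
      rw [SimpleGraph.pathGraph_adj] at hA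
      show (π a).val ≤ (π b).val + 1 ∧ (π b).val ≤ (π a).val + 1
      omega
  obtain ⟨x0, hx0⟩ := hne ⟨0, by omega⟩
  obtain ⟨y0, hy0⟩ := hne ⟨4, by omega⟩
  have hx : PfAux.rho π x0 = 0 := congrArg Fin.val (huq _ _ hx0)
  have hy : PfAux.rho π y0 = 4 := congrArg Fin.val (huq _ _ hy0)
  rcases PfAux.cls hst hn hSlast x0 y0 hx hy with
    ⟨hxv, _⟩ | ⟨hxw, hyv | hyq⟩ | ⟨hxq, hyw⟩ | ⟨⟨i, hxe⟩, hyv⟩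
  · exact PfAux.half hn hSlast W π hπ huq hst hconn (hxv ▸ hx) y0 hy
  · refine PfAux.half hn hSlast (fun k => W (PfAux.rv5 k)) (fun z => PfAux.rv5 (π z))
      (PfAux.rev_hπ W π hπ) (PfAux.rev_huq W π huq) (PfAux.rev_hst π hst)
      (fun k => hconn (PfAux.rv5 k)) ?_ x0 ?_
    · have h' : PfAux.rho π (gV S) = 4 := by rw [← hyv]; exact hy
      show 4 - PfAux.rho π (gV S) = 0
      omega
    · show 4 - PfAux.rho π x0 = 4
      rw [hx]
  · exact PfAux.caseWQ hn hSlast hSne W π hπ huq hst hconn (hxw ▸ hx) (hyq ▸ hy)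
  · refine PfAux.caseWQ hn hSlast hSne (fun k => W (PfAux.rv5 k)) (fun z => PfAux.rv5 (π z))
      (PfAux.rev_hπ W π hπ) (PfAux.rev_huq W π huq) (PfAux.rev_hst π hst)
      (fun k => hconn (PfAux.rv5 k)) ?_ ?_
    · have h' : PfAux.rho π (gW S) = 4 := by rw [← hyw]; exact hy
      show 4 - PfAux.rho π (gW S) = 0
      omega
    · have h' : PfAux.rho π (gQ S) = 0 := by rw [← hxq]; exact hx
      show 4 - PfAux.rho π (gQ S) = 4
      omega
  · refine PfAux.half hn hSlast (fun k => W (PfAux.rv5 k)) (fun z => PfAux.rv5 (π z))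
      (PfAux.rev_hπ W π hπ) (PfAux.rev_huq W π huq) (PfAux.rev_hst π hst)
      (fun k => hconn (PfAux.rv5 k)) ?_ x0 ?_
    · have h' : PfAux.rho π (gV S) = 4 := by rw [← hyv]; exact hy
      show 4 - PfAux.rho π (gV S) = 0
      omega
    · show 4 - PfAux.rho π x0 = 4
      rw [hx]
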